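/- For every field K there is no configuration 𝓛 of 8 mutually distinct lines in the projective plane over K with t_2(𝓛) = 1, t_3(𝓛) = 5, t_4(𝓛) = 2 and t_k(𝓛) = 0 for all k ≥ 5. -/

import Mathlib

/-- Points of the projective plane over `K`. -/
abbrev PPoint (K : Type*) [Field K] := Projectivization K (Fin 3 → K)

/-- Lines of the projective plane over `K`: points of the projectivization of the dual space. -/
abbrev PLine (K : Type*) [Field K] := Projectivization K (Module.Dual K (Fin 3 → K))

/-- A point lies on a line iff a representative functional of the line vanishes on a
representative vector of the point. -/
def OnLine {K : Type*} [Field K] (P : PPoint K) (L : PLine K) : Prop :=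
  L.rep P.rep = 0

/-- The multiplicity of a point `P` with respect to a configuration `𝓛`:
the number of lines of `𝓛` passing through `P`. -/
noncomputable def mult {K : Type*} [Field K] (𝓛 : Finset (PLine K)) (P : PPoint K) : ℕ :=
  {L : PLine K | L ∈ 𝓛 ∧ OnLine P L}.ncard

/-- The singular points of a configuration: points lying on at least two of its lines. -/
def SingPts {K : Type*} [Field K] (𝓛 : Finset (PLine K)) : Set (PPoint K) :=
  {P | 2 ≤ mult 𝓛 P}

/-- `tk 𝓛 k` is the number of points of multiplicity exactly `k` (used for `k ≥ 2`). -/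
noncomputable def tk {K : Type*} [Field K] (𝓛 : Finset (PLine K)) (k : ℕ) : ℕ :=
  {P : PPoint K | mult 𝓛 P = k}.ncard

/-- The linear Harbourne constant of a configuration `𝓛` of lines:
`(d² − Σ_P m_𝓛(P)²)/s` where the sum runs over the `s` singular points of `𝓛`. -/
noncomputable def HL {K : Type*} [Field K] (𝓛 : Finset (PLine K)) : ℚ :=
  ((𝓛.card : ℚ) ^ 2 - ∑ᶠ P ∈ SingPts 𝓛, (mult 𝓛 P : ℚ) ^ 2) / ((SingPts 𝓛).ncard : ℚ)

open Module Projectivization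

lemma exists_meet {K : Type*} [Field K] (L₁ L₂ : PLine K) :
    ∃ P : PPoint K, OnLine P L₁ ∧ OnLine P L₂ := by
  have hker : LinearMap.ker (L₁.rep.prod L₂.rep) ≠ ⊥ := by
    intro h
    have h1 := LinearMap.finrank_range_add_finrank_ker (L₁.rep.prod L₂.rep)
    rw [h, finrank_bot] at h1
    have h2 : finrank K (LinearMap.range (L₁.rep.prod L₂.rep)) ≤ finrank K (K × K) :=
      Submodule.finrank_le _
    have h3 : finrank K (K × K) = 2 := by simp [Module.finrank_prod]
    have h4 : finrank K (Fin 3 → K) = 3 := by simp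
    omega
  obtain ⟨v, hv_mem, hv⟩ := Submodule.exists_mem_ne_zero_of_ne_bot hker
  rw [LinearMap.mem_ker, LinearMap.prod_apply, Prod.mk_eq_zero] at hv_mem
  obtain ⟨a, ha⟩ := Projectivization.exists_smul_eq_mk_rep K v hv
  refine ⟨Projectivization.mk K v hv, ?_, ?_⟩ <;>
  · show _ = 0
    rw [← ha, Units.smul_def, map_smul]
    simp only [Function.prod] at hv_mem
    simp [hv_mem.1, hv_mem.2]

lemma unique_meet {K : Type*} [Field K] {P Q : PPoint K} {L₁ L₂ : PLine K}
    (hPQ : P ≠ Q) (h1 : OnLine P L₁) (h2 : OnLine Q L₁) (h3 : OnLine P L₂) (h4 : OnLine Q L₂) :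
    L₁ = L₂ := by
  have hli : LinearIndependent K (Projectivization.rep ∘ ![P, Q]) :=
    Projectivization.independent_iff.mp ((Projectivization.independent_pair_iff_ne P Q).mpr hPQ)
  have hspan : finrank K (Submodule.span K (Set.range (Projectivization.rep ∘ ![P, Q]))) = 2 := by
    rw [finrank_span_eq_card hli]
    simp
  have key : ∀ L : PLine K, OnLine P L → OnLine Q L →
      LinearMap.ker L.rep = Submodule.span K (Set.range (Projectivization.rep ∘ ![P, Q])) := by
    intro L hP hQ
    have hle : Submodule.span K (Set.range (Projectivization.rep ∘ ![P, Q]))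
        ≤ LinearMap.ker L.rep := by
      rw [Submodule.span_le]
      rintro x ⟨i, rfl⟩
      fin_cases i
      · simpa [OnLine] using hP
      · simpa [OnLine] using hQ
    have hrange : finrank K (LinearMap.range L.rep) = 1 := by
      have hne : LinearMap.range L.rep ≠ ⊥ := by
        simpa [LinearMap.range_eq_bot] using L.rep_nonzero
      have hle1 : finrank K (LinearMap.range L.rep) ≤ finrank K K := Submodule.finrank_le _
      rw [finrank_self] at hle1
      have hpos : finrank K (LinearMap.range L.rep) ≠ 0 := by
        simpa [Submodule.finrank_eq_zero] using hne
      omega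
    have hker : finrank K (LinearMap.ker L.rep) = 2 := by
      have h1 := LinearMap.finrank_range_add_finrank_ker L.rep
      have h4 : finrank K (Fin 3 → K) = 3 := by simp
      omega
    exact (Submodule.eq_of_le_of_finrank_le hle (by rw [hspan, hker])).symm
  have hkk : LinearMap.ker L₁.rep ≤ LinearMap.ker L₂.rep := by
    rw [key L₁ h1 h2, ← key L₂ h3 h4]
  have hmem : L₂.rep ∈ Submodule.span K (Set.range (fun _ : Unit => L₁.rep)) := by
    apply FiniteDimensional.mem_span_of_iInf_ker_le_ker (L := fun _ : Unit => L₁.rep)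
    simpa using hkk
  rw [Set.range_const, Submodule.mem_span_singleton] at hmem
  obtain ⟨c, hc⟩ := hmem
  have hc0 : c ≠ 0 := by
    rintro rfl
    rw [zero_smul] at hc
    exact L₂.rep_nonzero hc.symm
  rw [← Projectivization.mk_rep L₁, ← Projectivization.mk_rep L₂]
  exact ((Projectivization.mk_eq_mk_iff' K _ _ L₂.rep_nonzero L₁.rep_nonzero).mpr ⟨c, hc⟩).symm


/-- Over any field there is no configuration of `8` lines with `t₂ = 1`, `t₃ = 5`,
`t₄ = 2` and `t_k = 0` for all `k ≥ 5`. -/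
theorem no_eight_lines_config (K : Type*) [Field K] :
    ¬ ∃ 𝓛 : Finset (PLine K), 𝓛.card = 8 ∧ tk 𝓛 2 = 1 ∧ tk 𝓛 3 = 5 ∧ tk 𝓛 4 = 2 ∧
      ∀ k, 5 ≤ k → tk 𝓛 k = 0 := by
  rintro ⟨𝓛, hcard, h2, h3, h4, h5⟩
  classical
  set meet : PLine K → PLine K → PPoint K := fun L₁ L₂ => (exists_meet L₁ L₂).choose with hmeetdef
  have hmeet : ∀ L₁ L₂, OnLine (meet L₁ L₂) L₁ ∧ OnLine (meet L₁ L₂) L₂ :=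
    fun L₁ L₂ => (exists_meet L₁ L₂).choose_spec
  have hmult : ∀ P : PPoint K, mult 𝓛 P = (𝓛.filter (fun L => OnLine P L)).card := by
    intro P
    rw [mult, show {L : PLine K | L ∈ 𝓛 ∧ OnLine P L} = ↑(𝓛.filter (fun L => OnLine P L)) by
      ext L; simp, Set.ncard_coe_finset]
  have hsing : (SingPts 𝓛).Finite := by
    apply Set.Finite.subset
      (Set.Finite.image (fun p : PLine K × PLine K => meet p.1 p.2) (𝓛 ×ˢ 𝓛).finite_toSet)
    intro P hP
    have h2le : 1 < (𝓛.filter (fun L => OnLine P L)).card := by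
      rw [← hmult]; exact hP
    obtain ⟨a, ha, b, hb, hab⟩ := Finset.one_lt_card.mp h2le
    simp only [Finset.mem_filter] at ha hb
    refine ⟨(a, b), by simp [ha.1, hb.1], ?_⟩
    by_contra hne
    exact hab (unique_meet hne (hmeet a b).1 ha.2 (hmeet a b).2 hb.2)
  have hsub : ∀ k, 2 ≤ k → {P : PPoint K | mult 𝓛 P = k} ⊆ SingPts 𝓛 := by
    intro k hk P hP
    simp only [Set.mem_setOf_eq] at hP
    show 2 ≤ mult 𝓛 P
    rw [hP]; exact hk
  -- the two quadruple points
  obtain ⟨A, B, hAB, hset⟩ := Set.ncard_eq_two.mp h4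
  have hA4 : mult 𝓛 A = 4 := by
    have : A ∈ ({A, B} : Set (PPoint K)) := by simp
    rw [← hset] at this; exact this
  have hB4 : mult 𝓛 B = 4 := by
    have : B ∈ ({A, B} : Set (PPoint K)) := by simp
    rw [← hset] at this; exact this
  set S_A := 𝓛.filter (fun L => OnLine A L) with hSAdef
  set S_B := 𝓛.filter (fun L => OnLine B L) with hSBdef
  have hSA : S_A.card = 4 := by rw [← hmult, hA4]
  have hSB : S_B.card = 4 := by rw [← hmult, hB4]
  have hinter : (S_A ∩ S_B).card ≤ 1 := by
    apply Finset.card_le_one.mpr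
    intro a ha b hb
    simp only [Finset.mem_inter, hSAdef, hSBdef, Finset.mem_filter] at ha hb
    exact unique_meet hAB ha.1.2 ha.2.2 hb.1.2 hb.2.2
  have hdA : 3 ≤ (S_A \ S_B).card := by
    have := Finset.card_inter_add_card_sdiff S_A S_B
    omega
  have hdB : 3 ≤ (S_B \ S_A).card := by
    have := Finset.card_inter_add_card_sdiff S_B S_A
    have h' : (S_B ∩ S_A).card ≤ 1 := by rwa [Finset.inter_comm]
    omega
  -- target set of double and triple points
  set T : Set (PPoint K) := {P | mult 𝓛 P = 2} ∪ {P | mult 𝓛 P = 3} with hTdef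
  have hTfin : T.Finite := (hsing.subset (hsub 2 le_rfl)).union (hsing.subset (hsub 3 (by norm_num)))
  have hT6 : T.ncard = 6 := by
    rw [hTdef, Set.ncard_union_eq (by
        rw [Set.disjoint_left]; intro P hP hP'
        simp only [Set.mem_setOf_eq] at hP hP'; omega)
      (hsing.subset (hsub 2 le_rfl)) (hsing.subset (hsub 3 (by norm_num)))]
    rw [tk] at h2 h3
    omega
  set D := (S_A \ S_B) ×ˢ (S_B \ S_A) with hDdef
  have hD9 : 9 ≤ D.card := by
    rw [hDdef, Finset.card_product]
    calc 9 = 3 * 3 := rfl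
    _ ≤ _ := Nat.mul_le_mul hdA hdB
  set F : PLine K × PLine K → PPoint K := fun p => meet p.1 p.2 with hFdef
  -- basic facts about a pair in D
  have hfacts : ∀ p ∈ D, OnLine (F p) p.1 ∧ OnLine (F p) p.2 ∧ F p ≠ A ∧ F p ≠ B := by
    intro p hp
    rw [hDdef, Finset.mem_product] at hp
    obtain ⟨hpa, hpb⟩ := hp
    rw [Finset.mem_sdiff] at hpa hpb
    simp only [hSAdef, hSBdef, Finset.mem_filter, not_and] at hpa hpb
    have haA : OnLine A p.1 := hpa.1.2
    have hbB : OnLine B p.2 := hpb.1.2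
    have haB : ¬ OnLine B p.1 := hpa.2 hpa.1.1
    have hbA : ¬ OnLine A p.2 := hpb.2 hpb.1.1
    have hP1 : OnLine (F p) p.1 := (hmeet p.1 p.2).1
    have hP2 : OnLine (F p) p.2 := (hmeet p.1 p.2).2
    refine ⟨hP1, hP2, ?_, ?_⟩
    · rintro rfl; exact hbA hP2
    · rintro rfl; exact haB hP1
  have himg : ∀ p ∈ D, F p ∈ T := by
    intro p hp
    obtain ⟨hP1, hP2, hPA, hPB⟩ := hfacts p hp
    rw [hDdef, Finset.mem_product] at hp
    obtain ⟨hpa, hpb⟩ := hp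
    rw [Finset.mem_sdiff] at hpa hpb
    simp only [hSAdef, hSBdef, Finset.mem_filter, not_and] at hpa hpb
    have hab : p.1 ≠ p.2 := by
      intro h
      exact (hpa.2 hpa.1.1) (h ▸ hpb.1.2)
    have hm2 : 2 ≤ mult 𝓛 (F p) := by
      rw [hmult]
      apply Finset.one_lt_card.mpr
      exact ⟨p.1, Finset.mem_filter.mpr ⟨hpa.1.1, hP1⟩, p.2, Finset.mem_filter.mpr ⟨hpb.1.1, hP2⟩, hab⟩
    have hm4 : mult 𝓛 (F p) ≠ 4 := by
      intro h
      have : F p ∈ ({A, B} : Set (PPoint K)) := by rw [← hset]; exact h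
      simp only [Set.mem_insert_iff, Set.mem_singleton_iff] at this
      tauto
    have hm5 : mult 𝓛 (F p) < 5 := by
      by_contra h
      push_neg at h
      have h0 := h5 (mult 𝓛 (F p)) h
      rw [tk] at h0
      have hfin := hsing.subset (hsub (mult 𝓛 (F p)) (by omega))
      have hemp := (Set.ncard_eq_zero hfin).mp h0
      have : F p ∈ {Q : PPoint K | mult 𝓛 Q = mult 𝓛 (F p)} := rfl
      rw [hemp] at this
      exact this
    have : mult 𝓛 (F p) = 2 ∨ mult 𝓛 (F p) = 3 := by omega
    rcases this with h | h
    · exact Or.inl h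
    · exact Or.inr h
  have hinj : Set.InjOn F ↑D := by
    intro p hp q hq h
    rw [Finset.mem_coe] at hp hq
    obtain ⟨hP1, hP2, hPA, hPB⟩ := hfacts p hp
    obtain ⟨hQ1, hQ2, _, _⟩ := hfacts q hq
    rw [← h] at hQ1 hQ2
    rw [hDdef, Finset.mem_product] at hp hq
    have haA : OnLine A p.1 := (Finset.mem_filter.mp (Finset.mem_sdiff.mp hp.1).1).2
    have haA' : OnLine A q.1 := (Finset.mem_filter.mp (Finset.mem_sdiff.mp hq.1).1).2
    have hbB : OnLine B p.2 := (Finset.mem_filter.mp (Finset.mem_sdiff.mp hp.2).1).2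
    have hbB' : OnLine B q.2 := (Finset.mem_filter.mp (Finset.mem_sdiff.mp hq.2).1).2
    exact Prod.ext (unique_meet hPA hP1 haA hQ1 haA') (unique_meet hPB hP2 hbB hQ2 hbB')
  have : (9 : ℕ) ≤ 6 := by
    calc (9 : ℕ) ≤ D.card := hD9
    _ = (↑D : Set (PLine K × PLine K)).ncard := (Set.ncard_coe_finset D).symm
    _ = (F '' ↑D).ncard := (Set.ncard_image_of_injOn hinj).symm
    _ ≤ T.ncard := Set.ncard_le_ncard (by
        rintro x ⟨p, hp, rfl⟩
        exact himg p (Finset.mem_coe.mp hp)) hTfin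
    _ = 6 := hT6
  omega
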